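/- Let u = (x,y,x̄,ȳ) with (x,y) ∈ dom F × dom G, x̄ = x + σK*y and ȳ = y − τKx. For any u^k ∈ U, let u^{k+1} = (I − I_{ϱk})u^k + I_{ϱk} T u^k be one step of the relaxed PDR (RPDR) iteration with transitional variables x_test^{k+1}, y_test^{k+1}. Then L(x_test^{k+1}, y) − L(x, y_test^{k+1}) ≤ (1/2)( ‖u^k − u‖²_{M I_{ϱk}^{-1}} − ‖u^{k+1} − u‖²_{M I_{ϱk}^{-1}} − ‖u^{k+1} − u^k‖²_{M(2I − I_{ϱk})I_{ϱk}^{-2}} ). -/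

import Mathlib

open scoped RealInnerProductSpace

section
variable {X : Type*} [NormedAddCommGroup X] [InnerProductSpace ℝ X]

lemma quadA (N : X →L[ℝ] X) (ρ : ℝ) (hρ : ρ ≠ 0)
    (hsym : ∀ a b : X, ⟪N a, b⟫ = ⟪a, N b⟫) (w d : X) :
    (1/ρ) * ⟪N w - w, w⟫ - (1/ρ) * ⟪N (w + ρ•d) - (w + ρ•d), w + ρ•d⟫
      - ((2-ρ)/ρ^2) * ⟪N (ρ•d) - ρ•d, ρ•d⟫ = -2 * ⟪N (w+d) - (w+d), d⟫ := by
  have h1 : ⟪N w, d⟫ = ⟪N d, w⟫ := by rw [hsym]; exact real_inner_comm _ _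
  have h2 : ⟪w, d⟫ = ⟪d, w⟫ := real_inner_comm _ _
  simp only [map_add, map_smul, inner_sub_left, inner_add_left, inner_add_right,
    real_inner_smul_left, real_inner_smul_right]
  field_simp
  linear_combination (ρ : ℝ) * h1 - ρ * h2

lemma quadB (ρ : ℝ) (hρ : ρ ≠ 0) (w d : X) :
    (1/ρ) * ‖w‖^2 - (1/ρ) * ‖w + ρ•d‖^2 - ((2-ρ)/ρ^2) * ‖ρ•d‖^2
      = -2 * ⟪w + d, d⟫ := by
  have h2 : ⟪w, d⟫ = ⟪d, w⟫ := real_inner_comm _ _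
  simp only [← real_inner_self_eq_norm_sq, inner_add_left, inner_add_right,
    real_inner_smul_left, real_inner_smul_right]
  field_simp
  linear_combination (ρ : ℝ) * h2
end

section

variable {X Y : Type*}
  [NormedAddCommGroup X] [InnerProductSpace ℝ X] [CompleteSpace X]
  [NormedAddCommGroup Y] [InnerProductSpace ℝ Y] [CompleteSpace Y]

/-- The weighted quadratic form `‖u‖²_{𝐌 W}` on `𝕌 = (X × Y)²` for a block-diagonal
weight `W = Diag[a I, b I, c I, d I]`, where
`𝐌 = Diag[(N₁−I)/σ, (N₂−I)/τ, I/σ, I/τ]` and `u = (x, y, x̄, ȳ)`. -/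
noncomputable def MformW (σ τ a b c d : ℝ) (N₁ : X →L[ℝ] X) (N₂ : Y →L[ℝ] Y)
    (u : X × Y × X × Y) : ℝ :=
  a * (1 / σ) * ⟪N₁ u.1 - u.1, u.1⟫ + b * (1 / τ) * ⟪N₂ u.2.1 - u.2.1, u.2.1⟫
    + c * (1 / σ) * ‖u.2.2.1‖ ^ 2 + d * (1 / τ) * ‖u.2.2.2‖ ^ 2

/-- **Proposition 2.3.** If `u = (x, y, x̄, ȳ)` with `(x,y) ∈ dom F × dom G`,
`x̄ = x + σK*y`, `ȳ = y − τKx`, then one step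
`u^{k+1} = (I − I_ϱ)u^k + I_ϱ 𝒯u^k` of the relaxed preconditioned Douglas–Rachford
iteration (RPDR) with transitional variables `(x_test^{k+1}, y_test^{k+1})` satisfies
`ℒ(x_test^{k+1}, y) − ℒ(x, y_test^{k+1})
  ≤ ½( ‖u^k − u‖²_{𝐌 I_ϱ⁻¹} − ‖u^{k+1} − u‖²_{𝐌 I_ϱ⁻¹}
       − ‖u^{k+1} − u^k‖²_{𝐌(2I − I_ϱ)I_ϱ⁻²} )`. -/
theorem stmt_2
    (F : X → ℝ) (G : Y → ℝ)
    (hF : ConvexOn ℝ Set.univ F) (hFlsc : LowerSemicontinuous F)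
    (hG : ConvexOn ℝ Set.univ G) (hGlsc : LowerSemicontinuous G)
    (K : X →L[ℝ] Y)
    (σ τ : ℝ) (hσ : 0 < σ) (hτ : 0 < τ)
    (N₁ : X →L[ℝ] X) (N₂ : Y →L[ℝ] Y)
    (hN₁sa : IsSelfAdjoint N₁) (hN₂sa : IsSelfAdjoint N₂)
    (hN₁ : ∀ v : X, ‖v‖ ^ 2 ≤ ⟪N₁ v, v⟫)
    (hN₂ : ∀ v : Y, ‖v‖ ^ 2 ≤ ⟪N₂ v, v⟫)
    -- relaxation parameters
    (ρ ρx ρy : ℝ)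
    (hρ : ρ ∈ Set.Ioo (0 : ℝ) 2) (hρx : ρx ∈ Set.Ioo (0 : ℝ) 2)
    (hρy : ρy ∈ Set.Ioo (0 : ℝ) 2)
    -- the comparison point `u = (x₀, y₀, xb₀, yb₀)` with `x̄ = x + σK*y`, `ȳ = y − τKx`
    (x₀ : X) (y₀ : Y) (xb₀ : X) (yb₀ : Y)
    (hxb₀ : xb₀ = x₀ + σ • (ContinuousLinearMap.adjoint K) y₀)
    (hyb₀ : yb₀ = y₀ - τ • K x₀)
    -- input `u^k = (x, y, xb, yb)`; `(xt, yt)` are the first two components of `𝒯 u^k`,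
    -- `(xtst, ytst)` the transitional variables, and `(x', y', xb', yb')` the RPDR output
    (x x' xt xtst xb xb' : X) (y y' yt ytst yb yb' : Y)
    (hxt : N₁ xt = (N₁ x - x) + xb - σ • (ContinuousLinearMap.adjoint K) yt)
    (hyt : N₂ yt = (N₂ y - y) + yb + τ • K xt)
    (hxtst : ∀ w : X, σ * F xtst + ⟪(2 : ℝ) • xt - xb - xtst, w - xtst⟫ ≤ σ * F w)
    (hytst : ∀ w : Y, τ * G ytst + ⟪(2 : ℝ) • yt - yb - ytst, w - ytst⟫ ≤ τ * G w)
    (hx' : x' = (1 - ρ) • x + ρ • xt)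
    (hy' : y' = (1 - ρ) • y + ρ • yt)
    (hxb' : xb' = xb + ρx • (xtst - xt))
    (hyb' : yb' = yb + ρy • (ytst - yt)) :
    (F xtst + ⟪K xtst, y₀⟫ - G y₀) - (F x₀ + ⟪K x₀, ytst⟫ - G ytst)
      ≤ (1 / 2) *
        (MformW σ τ (1 / ρ) (1 / ρ) (1 / ρx) (1 / ρy) N₁ N₂
            ((x, y, xb, yb) - (x₀, y₀, xb₀, yb₀))
          - MformW σ τ (1 / ρ) (1 / ρ) (1 / ρx) (1 / ρy) N₁ N₂
              ((x', y', xb', yb') - (x₀, y₀, xb₀, yb₀))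
          - MformW σ τ ((2 - ρ) / ρ ^ 2) ((2 - ρ) / ρ ^ 2) ((2 - ρx) / ρx ^ 2)
              ((2 - ρy) / ρy ^ 2) N₁ N₂
              ((x', y', xb', yb') - (x, y, xb, yb))) := by
  obtain ⟨hρ0, -⟩ := hρ
  obtain ⟨hρx0, -⟩ := hρx
  obtain ⟨hρy0, -⟩ := hρy
  have hρ0' := hρ0.ne'
  have hρx0' := hρx0.ne'
  have hρy0' := hρy0.ne'
  have hsym1 : ∀ a b : X, ⟪N₁ a, b⟫ = ⟪a, N₁ b⟫ := fun a b => by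
    conv_lhs => rw [← hN₁sa.adjoint_eq]
    exact ContinuousLinearMap.adjoint_inner_left N₁ b a
  have hsym2 : ∀ a b : Y, ⟪N₂ a, b⟫ = ⟪a, N₂ b⟫ := fun a b => by
    conv_lhs => rw [← hN₂sa.adjoint_eq]
    exact ContinuousLinearMap.adjoint_inner_left N₂ b a
  -- subgradient inequalities
  have h1 : F xtst - F x₀ ≤ (1/σ) * ⟪(2 : ℝ) • xt - xb - xtst, xtst - x₀⟫ := by
    have h := hxtst x₀
    have hn : ⟪(2 : ℝ) • xt - xb - xtst, x₀ - xtst⟫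
        = -⟪(2 : ℝ) • xt - xb - xtst, xtst - x₀⟫ := by
      rw [← inner_neg_right]; congr 1; abel
    rw [hn] at h
    rw [show (1/σ) * ⟪(2 : ℝ) • xt - xb - xtst, xtst - x₀⟫
        = ⟪(2 : ℝ) • xt - xb - xtst, xtst - x₀⟫ / σ by ring, le_div_iff₀ hσ]
    linarith
  have h2 : G ytst - G y₀ ≤ (1/τ) * ⟪(2 : ℝ) • yt - yb - ytst, ytst - y₀⟫ := by
    have h := hytst y₀
    have hn : ⟪(2 : ℝ) • yt - yb - ytst, y₀ - ytst⟫
        = -⟪(2 : ℝ) • yt - yb - ytst, ytst - y₀⟫ := by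
      rw [← inner_neg_right]; congr 1; abel
    rw [hn] at h
    rw [show (1/τ) * ⟪(2 : ℝ) • yt - yb - ytst, ytst - y₀⟫
        = ⟪(2 : ℝ) • yt - yb - ytst, ytst - y₀⟫ / τ by ring, le_div_iff₀ hτ]
    linarith
  -- quadratic expansions
  have q1 := quadA N₁ ρ hρ0' hsym1 (x - x₀) (xt - x)
  rw [show (x - x₀) + ρ • (xt - x) = x' - x₀ by rw [hx']; module,
      show ρ • (xt - x) = x' - x by rw [hx']; module,
      show (x - x₀) + (xt - x) = xt - x₀ by abel] at q1
  have q2 := quadA N₂ ρ hρ0' hsym2 (y - y₀) (yt - y)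
  rw [show (y - y₀) + ρ • (yt - y) = y' - y₀ by rw [hy']; module,
      show ρ • (yt - y) = y' - y by rw [hy']; module,
      show (y - y₀) + (yt - y) = yt - y₀ by abel] at q2
  have q3 := quadB (X := X) ρx hρx0' (xb - xb₀) (xtst - xt)
  rw [show (xb - xb₀) + ρx • (xtst - xt) = xb' - xb₀ by rw [hxb']; module,
      show ρx • (xtst - xt) = xb' - xb by rw [hxb']; module] at q3
  have q4 := quadB (X := Y) ρy hρy0' (yb - yb₀) (ytst - yt)
  rw [show (yb - yb₀) + ρy • (ytst - yt) = yb' - yb₀ by rw [hyb']; module,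
      show ρy • (ytst - yt) = yb' - yb by rw [hyb']; module] at q4
  -- fixed point equations as residuals
  have r1 : N₁ (xt - x) - (xt - x) = xb - xt - σ • (ContinuousLinearMap.adjoint K) yt := by
    rw [map_sub, hxt]; module
  have r2 : N₂ (yt - y) - (yt - y) = yb - yt + τ • K xt := by
    rw [map_sub, hyt]; module
  have s1 : ⟪N₁ (xt - x₀) - (xt - x₀), xt - x⟫
      = ⟪xt - x₀, xb - xt - σ • (ContinuousLinearMap.adjoint K) yt⟫ := by
    rw [inner_sub_left, hsym1, ← inner_sub_right, r1]
  have s2 : ⟪N₂ (yt - y₀) - (yt - y₀), yt - y⟫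
      = ⟪yt - y₀, yb - yt + τ • K xt⟫ := by
    rw [inner_sub_left, hsym2, ← inner_sub_right, r2]
  rw [s1] at q1
  rw [s2] at q2
  -- final linear identity
  have key : (1 / 2) *
        (MformW σ τ (1 / ρ) (1 / ρ) (1 / ρx) (1 / ρy) N₁ N₂
            ((x, y, xb, yb) - (x₀, y₀, xb₀, yb₀))
          - MformW σ τ (1 / ρ) (1 / ρ) (1 / ρx) (1 / ρy) N₁ N₂
              ((x', y', xb', yb') - (x₀, y₀, xb₀, yb₀))
          - MformW σ τ ((2 - ρ) / ρ ^ 2) ((2 - ρ) / ρ ^ 2) ((2 - ρx) / ρx ^ 2)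
              ((2 - ρy) / ρy ^ 2) N₁ N₂
              ((x', y', xb', yb') - (x, y, xb, yb)))
      = (1/σ) * ⟪(2 : ℝ) • xt - xb - xtst, xtst - x₀⟫
        + (1/τ) * ⟪(2 : ℝ) • yt - yb - ytst, ytst - y₀⟫
        + ⟪K xtst, y₀⟫ - ⟪K x₀, ytst⟫ := by
    have expand : (1/σ) * ⟪(2 : ℝ) • xt - xb - xtst, xtst - x₀⟫
        + (1/τ) * ⟪(2 : ℝ) • yt - yb - ytst, ytst - y₀⟫
        + ⟪K xtst, y₀⟫ - ⟪K x₀, ytst⟫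
        = -((1/σ) * ⟪xt - x₀, xb - xt - σ • (ContinuousLinearMap.adjoint K) yt⟫
          + (1/τ) * ⟪yt - y₀, yb - yt + τ • K xt⟫
          + (1/σ) * ⟪(xb - xb₀) + (xtst - xt), xtst - xt⟫
          + (1/τ) * ⟪(yb - yb₀) + (ytst - yt), ytst - yt⟫) := by
      subst hxb₀ hyb₀
      simp only [inner_sub_left, inner_sub_right, inner_add_left, inner_add_right,
        real_inner_smul_left, real_inner_smul_right,
        ContinuousLinearMap.adjoint_inner_left, ContinuousLinearMap.adjoint_inner_right,
        map_sub, map_add, map_smul]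
      field_simp
      linear_combination -(τ) * real_inner_comm xt xtst
        + 2*(τ) * real_inner_comm xt x₀
        - (τ) * real_inner_comm xb x₀
        - (τ) * real_inner_comm xtst x₀
        - (τ) * real_inner_comm xt xb
        - (σ) * real_inner_comm yt ytst
        + 2*(σ) * real_inner_comm yt y₀
        - (σ) * real_inner_comm yb y₀
        - (σ) * real_inner_comm ytst y₀
        + (σ) * real_inner_comm yb yt
        - (τ*σ) * real_inner_comm (K xtst) y₀
        + (τ*σ) * real_inner_comm (K xt) yt
    have mid : (1 / 2) *
        (MformW σ τ (1 / ρ) (1 / ρ) (1 / ρx) (1 / ρy) N₁ N₂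
            ((x, y, xb, yb) - (x₀, y₀, xb₀, yb₀))
          - MformW σ τ (1 / ρ) (1 / ρ) (1 / ρx) (1 / ρy) N₁ N₂
              ((x', y', xb', yb') - (x₀, y₀, xb₀, yb₀))
          - MformW σ τ ((2 - ρ) / ρ ^ 2) ((2 - ρ) / ρ ^ 2) ((2 - ρx) / ρx ^ 2)
              ((2 - ρy) / ρy ^ 2) N₁ N₂
              ((x', y', xb', yb') - (x, y, xb, yb)))
        = -((1/σ) * ⟪xt - x₀, xb - xt - σ • (ContinuousLinearMap.adjoint K) yt⟫
          + (1/τ) * ⟪yt - y₀, yb - yt + τ • K xt⟫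
          + (1/σ) * ⟪(xb - xb₀) + (xtst - xt), xtst - xt⟫
          + (1/τ) * ⟪(yb - yb₀) + (ytst - yt), ytst - yt⟫) := by
      simp only [MformW, Prod.mk_sub_mk]
      linear_combination (1/(2*σ)) * q1 + (1/(2*τ)) * q2 + (1/(2*σ)) * q3 + (1/(2*τ)) * q4
    rw [mid, ← expand]
  linarith [h1, h2, key]


end
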